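/- arXiv:0901.0203 — 4 statements merged into one kernel-verified Lean document; each statement's English description precedes it below -/
import Mathlib

section
/- There exists a (necessarily unique) surjective group homomorphism π from G onto the symmetric group of permutations of {0,1,2,3} with π(M_X) = (0 1), π(M_Y) = (0 2), π(M_Z) = (0 3), and its kernel equals the four-element subgroup {1, g₁, g₂, g₃}, which is isomorphic to the Klein four-group ℤ/2 × ℤ/2. In particular G is an extension of S₄ by the Klein four-group. -/
set_option maxRecDepth 8000

open Matrix

/-- The matrix of the dualization functor `X` acting on `(γ,β,α,λ,μ,ν)`. -/
def MXmat : Matrix (Fin 6) (Fin 6) ℤ :=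
  !![0,0,0,0,-1,0; 0,0,0,0,0,-1; 0,0,1,0,0,0; 0,0,0,-1,0,0; -1,0,0,0,0,0; 0,-1,0,0,0,0]

/-- The matrix of the dualization functor `Y`. -/
def MYmat : Matrix (Fin 6) (Fin 6) ℤ :=
  !![0,0,0,-1,0,0; 0,1,0,0,0,0; 0,0,0,0,0,-1; -1,0,0,0,0,0; 0,0,0,0,-1,0; 0,0,-1,0,0,0]

/-- The matrix of the dualization functor `Z`. -/
def MZmat : Matrix (Fin 6) (Fin 6) ℤ :=
  !![1,0,0,0,0,0; 0,0,0,-1,0,0; 0,0,0,0,-1,0; 0,-1,0,0,0,0; 0,0,-1,0,0,0; 0,0,0,0,0,-1]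

/-- `M_X` as an element of `GL(6,ℤ)` (it is an involution, so it is its own inverse). -/
def MX : GL (Fin 6) ℤ := ⟨MXmat, MXmat, by decide, by decide⟩

/-- `M_Y` as an element of `GL(6,ℤ)`. -/
def MY : GL (Fin 6) ℤ := ⟨MYmat, MYmat, by decide, by decide⟩

/-- `M_Z` as an element of `GL(6,ℤ)`. -/
def MZ : GL (Fin 6) ℤ := ⟨MZmat, MZmat, by decide, by decide⟩

/-- The subgroup of `GL(6,ℤ)` generated by `M_X`, `M_Y`, `M_Z`: a faithful model of the
duality group `DF₃` of triple vector bundles. -/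
def G : Subgroup (GL (Fin 6) ℤ) := Subgroup.closure {MX, MY, MZ}

lemma hMX : MX ∈ G := Subgroup.subset_closure (by simp)
lemma hMY : MY ∈ G := Subgroup.subset_closure (by simp)
lemma hMZ : MZ ∈ G := Subgroup.subset_closure (by simp)

def g₁ : GL (Fin 6) ℤ := (MX * MY * MX * MZ) ^ 2
def g₂ : GL (Fin 6) ℤ := (MY * MZ * MY * MX) ^ 2
def g₃ : GL (Fin 6) ℤ := (MZ * MX * MZ * MY) ^ 2

lemma hg₁ : g₁ ∈ G :=
  G.pow_mem (G.mul_mem (G.mul_mem (G.mul_mem hMX hMY) hMX) hMZ) 2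
lemma hg₂ : g₂ ∈ G :=
  G.pow_mem (G.mul_mem (G.mul_mem (G.mul_mem hMY hMZ) hMY) hMX) 2
lemma hg₃ : g₃ ∈ G :=
  G.pow_mem (G.mul_mem (G.mul_mem (G.mul_mem hMZ hMX) hMZ) hMY) 2

/-! ### Signed permutation machinery -/

abbrev SP : Type := (Fin 6 → Fin 6) × (Fin 6 → Bool)

def spMul (x y : SP) : SP := (x.1 ∘ y.1, fun j => xor (x.2 (y.1 j)) (y.2 j))

def toMat (x : SP) : Matrix (Fin 6) (Fin 6) ℤ :=
  Matrix.of fun i j => if i = x.1 j then (if x.2 j then -1 else 1) else 0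

lemma toMat_mul (x y : SP) : toMat x * toMat y = toMat (spMul x y) := by
  ext i j
  rw [Matrix.mul_apply, Finset.sum_eq_single (y.1 j)]
  · cases hx : x.2 (y.1 j) <;> cases hy : y.2 j <;>
      by_cases h : i = x.1 (y.1 j) <;>
      simp [toMat, spMul, Function.comp, h, hx, hy]
  · intro k _ hk
    simp [toMat, hk]
  · intro h; exact absurd (Finset.mem_univ _) h
def D : Fin 96 → SP := ![
(![0,1,2,3,4,5], ![false,false,false,false,false,false]),
(![4,5,2,3,0,1], ![true,true,false,true,true,true]),
(![3,1,5,0,4,2], ![true,false,true,true,true,true]),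
(![0,3,4,1,2,5], ![false,true,true,true,true,true]),
(![4,2,5,0,3,1], ![false,false,true,false,false,true]),
(![2,5,4,1,0,3], ![false,false,true,false,true,false]),
(![3,5,1,4,0,2], ![false,true,false,false,false,true]),
(![1,3,5,0,2,4], ![false,true,false,true,false,false]),
(![4,3,0,5,2,1], ![true,false,false,false,true,false]),
(![3,0,4,1,5,2], ![true,false,false,true,false,false]),
(![0,2,1,4,3,5], ![true,false,false,true,true,false]),
(![2,4,5,0,1,3], ![true,true,false,false,true,false]),
(![2,1,0,5,4,3], ![false,true,false,true,false,true]),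
(![5,2,4,1,3,0], ![true,true,false,false,false,true]),
(![1,5,3,2,0,4], ![true,false,true,true,false,false]),
(![5,3,1,4,2,0], ![true,false,true,false,false,true]),
(![1,0,2,3,5,4], ![false,false,true,false,true,true]),
(![4,0,3,2,5,1], ![false,true,true,true,false,false]),
(![3,4,0,5,1,2], ![false,true,true,false,true,false]),
(![0,4,3,2,1,5], ![true,true,true,false,false,true]),
(![2,0,1,4,5,3], ![true,false,true,true,false,true]),
(![5,4,2,3,1,0], ![false,false,true,true,true,true]),
(![5,1,3,2,4,0], ![true,true,true,false,true,false]),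
(![1,2,0,5,3,4], ![false,true,true,true,true,false]),
(![5,1,3,2,4,0], ![false,true,false,true,true,true]),
(![1,2,0,5,3,4], ![true,true,false,false,true,true]),
(![2,0,1,4,5,3], ![false,true,true,true,true,false]),
(![5,4,2,3,1,0], ![true,true,true,true,false,false]),
(![0,4,3,2,1,5], ![true,false,false,true,true,true]),
(![2,0,1,4,5,3], ![true,true,false,false,true,true]),
(![1,2,0,5,3,4], ![true,false,true,true,false,true]),
(![4,0,3,2,5,1], ![false,false,false,false,true,false]),
(![3,4,0,5,1,2], ![false,false,false,true,false,false]),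
(![5,3,1,4,2,0], ![false,true,true,false,true,false]),
(![1,0,2,3,5,4], ![true,true,true,false,false,false]),
(![1,5,3,2,0,4], ![false,false,false,false,false,true]),
(![5,3,1,4,2,0], ![false,false,false,true,false,false]),
(![3,4,0,5,1,2], ![true,false,true,false,false,true]),
(![2,1,0,5,4,3], ![true,true,true,false,false,false]),
(![5,2,4,1,3,0], ![false,true,true,true,false,false]),
(![2,4,5,0,1,3], ![false,false,false,false,false,true]),
(![4,0,3,2,5,1], ![true,true,false,false,false,true]),
(![5,2,4,1,3,0], ![false,false,false,false,true,false]),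
(![0,2,1,4,3,5], ![true,true,true,false,false,false]),
(![2,4,5,0,1,3], ![true,false,true,true,false,false]),
(![1,5,3,2,0,4], ![true,true,false,false,true,false]),
(![4,3,0,5,2,1], ![true,true,true,true,false,false]),
(![3,0,4,1,5,2], ![true,true,true,false,true,false]),
(![1,3,5,0,2,4], ![true,false,false,true,true,true]),
(![5,1,3,2,4,0], ![true,false,false,true,false,false]),
(![3,0,4,1,5,2], ![false,true,false,true,true,true]),
(![3,5,1,4,0,2], ![true,true,true,true,false,false]),
(![1,3,5,0,2,4], ![true,true,true,false,false,true]),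
(![0,4,3,2,1,5], ![false,true,false,true,false,false]),
(![2,5,4,1,0,3], ![true,false,false,true,true,true]),
(![4,3,0,5,2,1], ![false,false,true,true,true,true]),
(![5,4,2,3,1,0], ![true,false,false,false,true,false]),
(![4,2,5,0,3,1], ![true,true,true,false,true,false]),
(![0,4,3,2,1,5], ![false,false,true,false,true,false]),
(![2,5,4,1,0,3], ![true,true,true,false,false,true]),
(![4,2,5,0,3,1], ![false,true,false,true,true,true]),
(![3,5,1,4,0,2], ![false,false,true,true,true,true]),
(![5,4,2,3,1,0], ![false,true,false,false,false,true]),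
(![5,1,3,2,4,0], ![false,false,true,false,false,true]),
(![0,3,4,1,2,5], ![false,false,false,false,false,true]),
(![2,1,0,5,4,3], ![false,false,true,false,true,true]),
(![1,0,2,3,5,4], ![false,true,false,true,false,true]),
(![3,1,5,0,4,2], ![false,true,true,true,false,false]),
(![1,5,3,2,0,4], ![false,true,true,true,true,true]),
(![0,3,4,1,2,5], ![true,false,true,true,false,false]),
(![3,1,5,0,4,2], ![false,false,false,false,true,false]),
(![0,2,1,4,3,5], ![false,false,true,false,true,true]),
(![1,0,2,3,5,4], ![true,false,false,true,true,false]),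
(![4,0,3,2,5,1], ![true,false,true,true,true,true]),
(![4,5,2,3,0,1], ![false,true,true,false,true,false]),
(![0,3,4,1,2,5], ![true,true,false,false,true,false]),
(![2,4,5,0,1,3], ![false,true,true,true,true,true]),
(![0,2,1,4,3,5], ![false,true,false,true,false,true]),
(![4,5,2,3,0,1], ![false,false,false,true,false,false]),
(![3,4,0,5,1,2], ![true,true,false,true,true,true]),
(![2,1,0,5,4,3], ![true,false,false,true,true,false]),
(![4,5,2,3,0,1], ![true,false,true,false,false,true]),
(![3,1,5,0,4,2], ![true,true,false,false,false,true]),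
(![5,2,4,1,3,0], ![true,false,true,true,true,true]),
(![5,3,1,4,2,0], ![true,true,false,true,true,true]),
(![0,1,2,3,4,5], ![false,true,true,true,true,false]),
(![2,5,4,1,0,3], ![false,true,false,true,false,false]),
(![1,3,5,0,2,4], ![false,false,true,false,true,false]),
(![3,5,1,4,0,2], ![true,false,false,false,true,false]),
(![0,1,2,3,4,5], ![true,true,false,false,true,true]),
(![1,2,0,5,3,4], ![false,false,false,false,false,false]),
(![4,3,0,5,2,1], ![false,true,false,false,false,true]),
(![0,1,2,3,4,5], ![true,false,true,true,false,true]),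
(![4,2,5,0,3,1], ![true,false,false,true,false,false]),
(![3,0,4,1,5,2], ![false,false,true,false,false,true]),
(![2,0,1,4,5,3], ![false,false,false,false,false,false])]
def pX : Fin 96 → Fin 96 := ![1,0,6,8,10,12,2,15,3,18,4,20,5,23,24,7,27,28,9,31,11,34,35,13,14,39,40,16,17,44,42,19,47,48,21,22,52,50,54,25,26,58,30,60,29,63,64,32,33,68,37,70,36,73,38,75,66,77,41,80,43,82,72,45,46,86,56,88,49,91,51,93,62,53,92,55,95,57,89,94,59,85,61,90,87,81,65,84,67,78,83,69,74,71,79,76]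
def pY : Fin 96 → Fin 96 := ![2,4,0,9,1,13,10,16,17,3,6,21,22,5,25,26,7,8,28,32,33,11,12,35,38,14,15,40,18,36,45,46,19,20,48,23,29,53,24,54,27,55,59,61,62,30,31,64,34,65,69,71,72,37,39,41,76,78,79,42,81,43,44,80,47,49,87,89,90,50,92,51,52,91,93,94,56,88,57,58,63,60,85,86,95,82,83,66,77,67,68,73,70,74,75,84]
def pZ : Fin 96 → Fin 96 := ![3,5,7,0,11,1,14,2,12,16,19,4,8,21,6,24,9,29,30,10,31,13,36,37,15,32,41,42,43,17,18,20,25,49,50,51,22,23,55,56,57,26,27,28,60,61,65,66,67,33,34,35,70,71,74,38,39,40,77,78,44,45,83,84,85,46,47,48,88,89,52,53,94,95,54,92,93,58,59,90,91,86,87,62,63,64,81,82,68,69,79,80,75,76,72,73]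
def dX : SP := (![4,5,2,3,0,1], ![true,true,false,true,true,true])
def dY : SP := (![3,1,5,0,4,2], ![true,false,true,true,true,true])
def dZ : SP := (![0,3,4,1,2,5], ![false,true,true,true,true,true])

lemma hMXd : MXmat = toMat dX := by decide
lemma hMYd : MYmat = toMat dY := by decide
lemma hMZd : MZmat = toMat dZ := by decide
lemma hId : (1 : Matrix (Fin 6) (Fin 6) ℤ) = toMat (D 0) := by decide
lemma stepX : ∀ k, spMul dX (D k) = D (pX k) := by decide
lemma stepY : ∀ k, spMul dY (D k) = D (pY k) := by decide
lemma stepZ : ∀ k, spMul dZ (D k) = D (pZ k) := by decide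

def wv : Fin 4 → Fin 6 → ZMod 2 := ![![1,1,1,0,0,0], ![0,0,1,0,1,1], ![0,1,0,1,0,1], ![1,0,0,1,1,0]]

def m2mat (A : Matrix (Fin 6) (Fin 6) ℤ) : Matrix (Fin 6) (Fin 6) (ZMod 2) :=
  A.map (Int.castRingHom (ZMod 2))

lemma m2mat_mul (A B : Matrix (Fin 6) (Fin 6) ℤ) : m2mat (A * B) = m2mat A * m2mat B :=
  Matrix.map_mul

lemma m2mat_one : m2mat 1 = 1 :=
  Matrix.map_one _ (map_zero _) (map_one _)

lemma wv_inj : Function.Injective wv := by decide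
lemma stabAll : ∀ k, ∀ i : Fin 4, ∃ j : Fin 4,
    (m2mat (toMat (D k))).mulVec (wv i) = wv j := by decide
lemma kerclass : ∀ k : Fin 96, (∀ i : Fin 4, (m2mat (toMat (D k))).mulVec (wv i) = wv i) →
    k = 0 ∨ k = 85 ∨ k = 89 ∨ k = 92 := by decide
lemma hgenX : ∀ i : Fin 4, (m2mat (toMat dX)).mulVec (wv i) = wv (Equiv.swap 0 1 i) := by decide
lemma hgenY : ∀ i : Fin 4, (m2mat (toMat dY)).mulVec (wv i) = wv (Equiv.swap 0 2 i) := by decide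
lemma hgenZ : ∀ i : Fin 4, (m2mat (toMat dZ)).mulVec (wv i) = wv (Equiv.swap 0 3 i) := by decide
lemma hfix1 : ∀ i : Fin 4, (m2mat (toMat (D 85))).mulVec (wv i) = wv i := by decide
lemma hfix2 : ∀ i : Fin 4, (m2mat (toMat (D 89))).mulVec (wv i) = wv i := by decide
lemma hfix3 : ∀ i : Fin 4, (m2mat (toMat (D 92))).mulVec (wv i) = wv i := by decide

/-! ### Every element of `G` is in the table -/

lemma memE : ∀ g : G, ∃ k : Fin 96, ((g : GL (Fin 6) ℤ) : Matrix (Fin 6) (Fin 6) ℤ) = toMat (D k) := by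
  rintro ⟨g, hg⟩
  induction hg using Subgroup.closure_induction_left with
  | one => exact ⟨0, by rw [Units.val_one]; exact hId⟩
  | mul_left x hx y hy ih =>
    obtain ⟨k, hk⟩ := ih
    rcases hx with rfl | rfl | rfl
    · exact ⟨pX k, by rw [Units.val_mul, show (MX : Matrix (Fin 6) (Fin 6) ℤ) = MXmat from rfl,
        hMXd, hk, toMat_mul, stepX k]⟩
    · exact ⟨pY k, by rw [Units.val_mul, show (MY : Matrix (Fin 6) (Fin 6) ℤ) = MYmat from rfl,
        hMYd, hk, toMat_mul, stepY k]⟩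
    · exact ⟨pZ k, by rw [Units.val_mul, show (MZ : Matrix (Fin 6) (Fin 6) ℤ) = MZmat from rfl,
        hMZd, hk, toMat_mul, stepZ k]⟩
  | inv_mul_cancel x hx y hy ih =>
    obtain ⟨k, hk⟩ := ih
    rcases hx with rfl | rfl | rfl
    · exact ⟨pX k, by rw [Units.val_mul, show ((MX⁻¹ : GL (Fin 6) ℤ) : Matrix (Fin 6) (Fin 6) ℤ) = MXmat from rfl,
        hMXd, hk, toMat_mul, stepX k]⟩
    · exact ⟨pY k, by rw [Units.val_mul, show ((MY⁻¹ : GL (Fin 6) ℤ) : Matrix (Fin 6) (Fin 6) ℤ) = MYmat from rfl,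
        hMYd, hk, toMat_mul, stepY k]⟩
    · exact ⟨pZ k, by rw [Units.val_mul, show ((MZ⁻¹ : GL (Fin 6) ℤ) : Matrix (Fin 6) (Fin 6) ℤ) = MZmat from rfl,
        hMZd, hk, toMat_mul, stepZ k]⟩

/-! ### The homomorphism to `S₄` -/

lemma stab (g : G) (i : Fin 4) :
    ∃ j : Fin 4, (m2mat ((g : GL (Fin 6) ℤ) : Matrix (Fin 6) (Fin 6) ℤ)).mulVec (wv i) = wv j := by
  obtain ⟨k, hk⟩ := memE g
  rw [hk]; exact stabAll k i

noncomputable def act (g : G) (i : Fin 4) : Fin 4 := (stab g i).choose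

lemma act_spec (g : G) (i : Fin 4) :
    (m2mat ((g : GL (Fin 6) ℤ) : Matrix (Fin 6) (Fin 6) ℤ)).mulVec (wv i) = wv (act g i) :=
  (stab g i).choose_spec

lemma act_mul (g h : G) (i : Fin 4) : act (g * h) i = act g (act h i) := by
  apply wv_inj
  rw [← act_spec, ← act_spec, ← act_spec]
  rw [show ((↑(g * h) : GL (Fin 6) ℤ) : Matrix (Fin 6) (Fin 6) ℤ)
      = ((g : GL (Fin 6) ℤ) : Matrix (Fin 6) (Fin 6) ℤ) * ((h : GL (Fin 6) ℤ) : Matrix (Fin 6) (Fin 6) ℤ)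
    from rfl, m2mat_mul, Matrix.mulVec_mulVec]

lemma act_one (i : Fin 4) : act (1 : G) i = i := by
  apply wv_inj
  rw [← act_spec]
  rw [show ((↑(1 : G) : GL (Fin 6) ℤ) : Matrix (Fin 6) (Fin 6) ℤ) = 1 from rfl, m2mat_one,
    Matrix.one_mulVec]

lemma act_left (g : G) : Function.LeftInverse (act g⁻¹) (act g) := fun i => by
  rw [← act_mul, inv_mul_cancel, act_one]

lemma act_right (g : G) : Function.RightInverse (act g⁻¹) (act g) := fun i => by
  rw [← act_mul, mul_inv_cancel, act_one]

noncomputable def piHom : G →* Equiv.Perm (Fin 4) where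
  toFun g := ⟨act g, act g⁻¹, act_left g, act_right g⟩
  map_one' := Equiv.ext fun i => act_one i
  map_mul' g h := Equiv.ext fun i => act_mul g h i

lemma piHom_apply (g : G) (i : Fin 4) : piHom g i = act g i := rfl

lemma pi_MX : piHom ⟨MX, hMX⟩ = Equiv.swap 0 1 := by
  apply Equiv.ext; intro i
  have h : (m2mat (((⟨MX, hMX⟩ : G) : GL (Fin 6) ℤ) : Matrix (Fin 6) (Fin 6) ℤ)).mulVec (wv i)
      = wv (Equiv.swap 0 1 i) := by
    rw [show (((⟨MX, hMX⟩ : G) : GL (Fin 6) ℤ) : Matrix (Fin 6) (Fin 6) ℤ) = MXmat from rfl, hMXd]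
    exact hgenX i
  exact wv_inj ((act_spec _ i).symm.trans h)

lemma pi_MY : piHom ⟨MY, hMY⟩ = Equiv.swap 0 2 := by
  apply Equiv.ext; intro i
  have h : (m2mat (((⟨MY, hMY⟩ : G) : GL (Fin 6) ℤ) : Matrix (Fin 6) (Fin 6) ℤ)).mulVec (wv i)
      = wv (Equiv.swap 0 2 i) := by
    rw [show (((⟨MY, hMY⟩ : G) : GL (Fin 6) ℤ) : Matrix (Fin 6) (Fin 6) ℤ) = MYmat from rfl, hMYd]
    exact hgenY i
  exact wv_inj ((act_spec _ i).symm.trans h)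

lemma pi_MZ : piHom ⟨MZ, hMZ⟩ = Equiv.swap 0 3 := by
  apply Equiv.ext; intro i
  have h : (m2mat (((⟨MZ, hMZ⟩ : G) : GL (Fin 6) ℤ) : Matrix (Fin 6) (Fin 6) ℤ)).mulVec (wv i)
      = wv (Equiv.swap 0 3 i) := by
    rw [show (((⟨MZ, hMZ⟩ : G) : GL (Fin 6) ℤ) : Matrix (Fin 6) (Fin 6) ℤ) = MZmat from rfl, hMZd]
    exact hgenZ i
  exact wv_inj ((act_spec _ i).symm.trans h)

/-! ### The values `g₁ g₂ g₃` in the table -/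

lemma hG1val : (g₁ : Matrix (Fin 6) (Fin 6) ℤ) = toMat (D 85) := by
  show (((MX * MY * MX * MZ) ^ 2 : GL (Fin 6) ℤ) : Matrix (Fin 6) (Fin 6) ℤ) = _
  rw [Units.val_pow_eq_pow_val, Units.val_mul, Units.val_mul, Units.val_mul, sq]
  rw [show (MX : Matrix (Fin 6) (Fin 6) ℤ) = MXmat from rfl,
    show (MY : Matrix (Fin 6) (Fin 6) ℤ) = MYmat from rfl,
    show (MZ : Matrix (Fin 6) (Fin 6) ℤ) = MZmat from rfl, hMXd, hMYd, hMZd]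
  rw [toMat_mul, toMat_mul, toMat_mul, toMat_mul]
  decide

lemma hG2val : (g₂ : Matrix (Fin 6) (Fin 6) ℤ) = toMat (D 89) := by
  show (((MY * MZ * MY * MX) ^ 2 : GL (Fin 6) ℤ) : Matrix (Fin 6) (Fin 6) ℤ) = _
  rw [Units.val_pow_eq_pow_val, Units.val_mul, Units.val_mul, Units.val_mul, sq]
  rw [show (MX : Matrix (Fin 6) (Fin 6) ℤ) = MXmat from rfl,
    show (MY : Matrix (Fin 6) (Fin 6) ℤ) = MYmat from rfl,
    show (MZ : Matrix (Fin 6) (Fin 6) ℤ) = MZmat from rfl, hMXd, hMYd, hMZd]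
  rw [toMat_mul, toMat_mul, toMat_mul, toMat_mul]
  decide

lemma hG3val : (g₃ : Matrix (Fin 6) (Fin 6) ℤ) = toMat (D 92) := by
  show (((MZ * MX * MZ * MY) ^ 2 : GL (Fin 6) ℤ) : Matrix (Fin 6) (Fin 6) ℤ) = _
  rw [Units.val_pow_eq_pow_val, Units.val_mul, Units.val_mul, Units.val_mul, sq]
  rw [show (MX : Matrix (Fin 6) (Fin 6) ℤ) = MXmat from rfl,
    show (MY : Matrix (Fin 6) (Fin 6) ℤ) = MYmat from rfl,
    show (MZ : Matrix (Fin 6) (Fin 6) ℤ) = MZmat from rfl, hMXd, hMYd, hMZd]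
  rw [toMat_mul, toMat_mul, toMat_mul, toMat_mul]
  decide
/-! ### `π` kills `g₁ g₂ g₃` -/

lemma pi_g1 : piHom ⟨g₁, hg₁⟩ = 1 := by
  apply Equiv.ext; intro i
  have h : (m2mat (((⟨g₁, hg₁⟩ : G) : GL (Fin 6) ℤ) : Matrix (Fin 6) (Fin 6) ℤ)).mulVec (wv i)
      = wv i := by
    rw [show (((⟨g₁, hg₁⟩ : G) : GL (Fin 6) ℤ) : Matrix (Fin 6) (Fin 6) ℤ)
        = (g₁ : Matrix (Fin 6) (Fin 6) ℤ) from rfl, hG1val]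
    exact hfix1 i
  exact wv_inj ((act_spec _ i).symm.trans h)

lemma pi_g2 : piHom ⟨g₂, hg₂⟩ = 1 := by
  apply Equiv.ext; intro i
  have h : (m2mat (((⟨g₂, hg₂⟩ : G) : GL (Fin 6) ℤ) : Matrix (Fin 6) (Fin 6) ℤ)).mulVec (wv i)
      = wv i := by
    rw [show (((⟨g₂, hg₂⟩ : G) : GL (Fin 6) ℤ) : Matrix (Fin 6) (Fin 6) ℤ)
        = (g₂ : Matrix (Fin 6) (Fin 6) ℤ) from rfl, hG2val]
    exact hfix2 i
  exact wv_inj ((act_spec _ i).symm.trans h)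

lemma pi_g3 : piHom ⟨g₃, hg₃⟩ = 1 := by
  apply Equiv.ext; intro i
  have h : (m2mat (((⟨g₃, hg₃⟩ : G) : GL (Fin 6) ℤ) : Matrix (Fin 6) (Fin 6) ℤ)).mulVec (wv i)
      = wv i := by
    rw [show (((⟨g₃, hg₃⟩ : G) : GL (Fin 6) ℤ) : Matrix (Fin 6) (Fin 6) ℤ)
        = (g₃ : Matrix (Fin 6) (Fin 6) ℤ) from rfl, hG3val]
    exact hfix3 i
  exact wv_inj ((act_spec _ i).symm.trans h)

/-! ### Kernel -/

lemma kerset : (piHom.ker : Set G) = {1, ⟨g₁, hg₁⟩, ⟨g₂, hg₂⟩, ⟨g₃, hg₃⟩} := by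
  ext x
  simp only [SetLike.mem_coe, MonoidHom.mem_ker, Set.mem_insert_iff, Set.mem_singleton_iff]
  constructor
  · intro hx
    have hact : ∀ i : Fin 4, act x i = i := fun i => by
      have := Equiv.ext_iff.1 hx i
      exact this
    obtain ⟨k, hk⟩ := memE x
    have hfix : ∀ i : Fin 4, (m2mat (toMat (D k))).mulVec (wv i) = wv i := fun i => by
      rw [← hk]
      exact (act_spec x i).trans (congrArg wv (hact i))
    rcases kerclass k hfix with rfl | rfl | rfl | rfl
    · exact Or.inl (Subtype.ext (Units.ext (hk.trans hId.symm)))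
    · exact Or.inr (Or.inl (Subtype.ext (Units.ext (hk.trans hG1val.symm))))
    · exact Or.inr (Or.inr (Or.inl (Subtype.ext (Units.ext (hk.trans hG2val.symm)))))
    · exact Or.inr (Or.inr (Or.inr (Subtype.ext (Units.ext (hk.trans hG3val.symm)))))
  · rintro (rfl | rfl | rfl | rfl)
    · exact map_one piHom
    · exact pi_g1
    · exact pi_g2
    · exact pi_g3

/-! ### Surjectivity -/

lemma genPerm (σ : Equiv.Perm (Fin 4)) :
    σ ∈ Subgroup.closure
      ({Equiv.swap 0 1, Equiv.swap 0 2, Equiv.swap 0 3} : Set (Equiv.Perm (Fin 4))) := by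
  set S : Set (Equiv.Perm (Fin 4)) := {Equiv.swap 0 1, Equiv.swap 0 2, Equiv.swap 0 3} with hS
  have h1 : Equiv.swap (0 : Fin 4) 1 ∈ Subgroup.closure S := Subgroup.subset_closure (by simp [hS])
  have h2 : Equiv.swap (0 : Fin 4) 2 ∈ Subgroup.closure S := Subgroup.subset_closure (by simp [hS])
  have h3 : Equiv.swap (0 : Fin 4) 3 ∈ Subgroup.closure S := Subgroup.subset_closure (by simp [hS])
  have htop : (⊤ : Subgroup (Equiv.Perm (Fin 4))) ≤ Subgroup.closure S := by
    rw [← Equiv.Perm.closure_isSwap]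
    refine (Subgroup.closure_le _).2 ?_
    rintro τ ⟨a, b, hab, rfl⟩
    fin_cases a <;> fin_cases b
    · exact absurd rfl hab
    · exact h1
    · exact h2
    · exact h3
    · rw [Equiv.swap_comm]; exact h1
    · exact absurd rfl hab
    · show Equiv.swap (1 : Fin 4) 2 ∈ (Subgroup.closure S : Set (Equiv.Perm (Fin 4)))
      rw [show Equiv.swap (1 : Fin 4) 2 = Equiv.swap 0 1 * Equiv.swap 0 2 * Equiv.swap 0 1
        from by decide]
      exact mul_mem (mul_mem h1 h2) h1
    · show Equiv.swap (1 : Fin 4) 3 ∈ (Subgroup.closure S : Set (Equiv.Perm (Fin 4)))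
      rw [show Equiv.swap (1 : Fin 4) 3 = Equiv.swap 0 1 * Equiv.swap 0 3 * Equiv.swap 0 1
        from by decide]
      exact mul_mem (mul_mem h1 h3) h1
    · rw [Equiv.swap_comm]; exact h2
    · show Equiv.swap (2 : Fin 4) 1 ∈ (Subgroup.closure S : Set (Equiv.Perm (Fin 4)))
      rw [show Equiv.swap (2 : Fin 4) 1 = Equiv.swap 0 1 * Equiv.swap 0 2 * Equiv.swap 0 1
        from by decide]
      exact mul_mem (mul_mem h1 h2) h1
    · exact absurd rfl hab
    · show Equiv.swap (2 : Fin 4) 3 ∈ (Subgroup.closure S : Set (Equiv.Perm (Fin 4)))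
      rw [show Equiv.swap (2 : Fin 4) 3 = Equiv.swap 0 2 * Equiv.swap 0 3 * Equiv.swap 0 2
        from by decide]
      exact mul_mem (mul_mem h2 h3) h2
    · rw [Equiv.swap_comm]; exact h3
    · show Equiv.swap (3 : Fin 4) 1 ∈ (Subgroup.closure S : Set (Equiv.Perm (Fin 4)))
      rw [show Equiv.swap (3 : Fin 4) 1 = Equiv.swap 0 1 * Equiv.swap 0 3 * Equiv.swap 0 1
        from by decide]
      exact mul_mem (mul_mem h1 h3) h1
    · show Equiv.swap (3 : Fin 4) 2 ∈ (Subgroup.closure S : Set (Equiv.Perm (Fin 4)))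
      rw [show Equiv.swap (3 : Fin 4) 2 = Equiv.swap 0 2 * Equiv.swap 0 3 * Equiv.swap 0 2
        from by decide]
      exact mul_mem (mul_mem h2 h3) h2
    · exact absurd rfl hab
  exact htop (Subgroup.mem_top σ)

lemma pi_surj : Function.Surjective piHom := by
  intro σ
  have h : σ ∈ piHom.range := by
    refine (Subgroup.closure_le piHom.range).2 ?_ (genPerm σ)
    rintro τ (rfl | rfl | rfl)
    · exact ⟨⟨MX, hMX⟩, pi_MX⟩
    · exact ⟨⟨MY, hMY⟩, pi_MY⟩
    · exact ⟨⟨MZ, hMZ⟩, pi_MZ⟩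
  exact h

/-! ### Uniqueness -/

lemma pi_unique (π : G →* Equiv.Perm (Fin 4))
    (hX : π ⟨MX, hMX⟩ = Equiv.swap 0 1) (hY : π ⟨MY, hMY⟩ = Equiv.swap 0 2)
    (hZ : π ⟨MZ, hMZ⟩ = Equiv.swap 0 3) : π = piHom := by
  refine MonoidHom.ext fun x => ?_
  have htop : Subgroup.closure (((↑) : G → GL (Fin 6) ℤ) ⁻¹' {MX, MY, MZ}) = ⊤ :=
    Subgroup.closure_closure_coe_preimage
  have hx : x ∈ Subgroup.closure (((↑) : G → GL (Fin 6) ℤ) ⁻¹' {MX, MY, MZ}) := by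
    rw [htop]; exact Subgroup.mem_top x
  induction hx using Subgroup.closure_induction with
  | mem y hy =>
    rcases hy with h | h | h
    · rw [show y = ⟨MX, hMX⟩ from Subtype.ext h, hX, pi_MX]
    · rw [show y = ⟨MY, hMY⟩ from Subtype.ext h, hY, pi_MY]
    · rw [show y = ⟨MZ, hMZ⟩ from Subtype.ext h, hZ, pi_MZ]
  | one => rw [_root_.map_one, _root_.map_one]
  | mul x y hx hy ihx ihy => rw [_root_.map_mul, _root_.map_mul, ihx, ihy]
  | inv x hx ih => rw [map_inv, map_inv, ih]

/-! ### Klein four group -/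

lemma klein : Nonempty (piHom.ker ≃* (Multiplicative (ZMod 2) × Multiplicative (ZMod 2))) := by
  classical
  have hmemA : (⟨g₁, hg₁⟩ : G) ∈ piHom.ker := pi_g1
  have hmemB : (⟨g₂, hg₂⟩ : G) ∈ piHom.ker := pi_g2
  have hmemC : (⟨g₃, hg₃⟩ : G) ∈ piHom.ker := pi_g3
  set A : piHom.ker := ⟨⟨g₁, hg₁⟩, hmemA⟩ with hA
  set B : piHom.ker := ⟨⟨g₂, hg₂⟩, hmemB⟩ with hB
  set C : piHom.ker := ⟨⟨g₃, hg₃⟩, hmemC⟩ with hC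
  -- classification of kernel elements
  have cls : ∀ x : piHom.ker, x = 1 ∨ x = A ∨ x = B ∨ x = C := by
    intro x
    have hx : (x : G) ∈ (piHom.ker : Set G) := x.2
    rw [kerset] at hx
    simp only [Set.mem_insert_iff, Set.mem_singleton_iff] at hx
    rcases hx with h | h | h | h
    · exact Or.inl (Subtype.ext h)
    · exact Or.inr (Or.inl (Subtype.ext h))
    · exact Or.inr (Or.inr (Or.inl (Subtype.ext h)))
    · exact Or.inr (Or.inr (Or.inr (Subtype.ext h)))
  -- multiplication table (at the level of matrices)
  have tbl : ∀ (x y z : piHom.ker),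
      (((x : G) : GL (Fin 6) ℤ) : Matrix (Fin 6) (Fin 6) ℤ)
        * (((y : G) : GL (Fin 6) ℤ) : Matrix (Fin 6) (Fin 6) ℤ)
        = (((z : G) : GL (Fin 6) ℤ) : Matrix (Fin 6) (Fin 6) ℤ) → x * y = z := by
    intro x y z h
    exact Subtype.ext (Subtype.ext (Units.ext h))
  have hAv : (((A : G) : GL (Fin 6) ℤ) : Matrix (Fin 6) (Fin 6) ℤ) = toMat (D 85) := hG1val
  have hBv : (((B : G) : GL (Fin 6) ℤ) : Matrix (Fin 6) (Fin 6) ℤ) = toMat (D 89) := hG2val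
  have hCv : (((C : G) : GL (Fin 6) ℤ) : Matrix (Fin 6) (Fin 6) ℤ) = toMat (D 92) := hG3val
  have h1v : ((((1 : piHom.ker) : G) : GL (Fin 6) ℤ) : Matrix (Fin 6) (Fin 6) ℤ) = toMat (D 0) :=
    hId
  have hAA : A * A = 1 := tbl _ _ _ (by rw [hAv, h1v, toMat_mul]; decide)
  have hBB : B * B = 1 := tbl _ _ _ (by rw [hBv, h1v, toMat_mul]; decide)
  have hCC : C * C = 1 := tbl _ _ _ (by rw [hCv, h1v, toMat_mul]; decide)
  have hAB : A * B = C := tbl _ _ _ (by rw [hAv, hBv, hCv, toMat_mul]; decide)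
  have hBA : B * A = C := tbl _ _ _ (by rw [hAv, hBv, hCv, toMat_mul]; decide)
  have hAC : A * C = B := tbl _ _ _ (by rw [hAv, hBv, hCv, toMat_mul]; decide)
  have hCA : C * A = B := tbl _ _ _ (by rw [hAv, hBv, hCv, toMat_mul]; decide)
  have hBC : B * C = A := tbl _ _ _ (by rw [hAv, hBv, hCv, toMat_mul]; decide)
  have hCB : C * B = A := tbl _ _ _ (by rw [hAv, hBv, hCv, toMat_mul]; decide)
  -- distinctness
  have hne : ∀ x y : piHom.ker,
      (((x : G) : GL (Fin 6) ℤ) : Matrix (Fin 6) (Fin 6) ℤ)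
        ≠ (((y : G) : GL (Fin 6) ℤ) : Matrix (Fin 6) (Fin 6) ℤ) → x ≠ y :=
    fun x y h hxy => h (by rw [hxy])
  have h1A : (1 : piHom.ker) ≠ A := hne _ _ (by rw [h1v, hAv]; decide)
  have h1B : (1 : piHom.ker) ≠ B := hne _ _ (by rw [h1v, hBv]; decide)
  have h1C : (1 : piHom.ker) ≠ C := hne _ _ (by rw [h1v, hCv]; decide)
  have hBA' : B ≠ A := hne _ _ (by rw [hBv, hAv]; decide)
  have hCA' : C ≠ A := hne _ _ (by rw [hCv, hAv]; decide)
  have hCB' : C ≠ B := hne _ _ (by rw [hCv, hBv]; decide)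
  -- the bijection
  set u : Multiplicative (ZMod 2) := Multiplicative.ofAdd 1 with hu
  set f : piHom.ker → Multiplicative (ZMod 2) × Multiplicative (ZMod 2) := fun x =>
    if x = A then (u, 1) else if x = B then (1, u) else if x = C then (u, u) else (1, 1)
    with hf
  set fi : Multiplicative (ZMod 2) × Multiplicative (ZMod 2) → piHom.ker := fun z =>
    if z = (u, 1) then A else if z = (1, u) then B else if z = (u, u) then C else 1
    with hfi
  have hf1 : f 1 = (1, 1) := by
    simp [hf, h1A, h1B, h1C]
  have hfA : f A = (u, 1) := by simp [hf]
  have hfB : f B = (1, u) := by simp [hf, hBA']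
  have hfC : f C = (u, u) := by simp [hf, hCA', hCB']
  have hv1 : (1 : Multiplicative (ZMod 2) × Multiplicative (ZMod 2)) ≠ (u, 1) := by
    rw [hu]; decide
  have hv2 : (1 : Multiplicative (ZMod 2) × Multiplicative (ZMod 2)) ≠ (1, u) := by
    rw [hu]; decide
  have hv3 : (1 : Multiplicative (ZMod 2) × Multiplicative (ZMod 2)) ≠ (u, u) := by
    rw [hu]; decide
  have hv4 : ((1, u) : Multiplicative (ZMod 2) × Multiplicative (ZMod 2)) ≠ (u, 1) := by
    rw [hu]; decide
  have hv5 : ((u, u) : Multiplicative (ZMod 2) × Multiplicative (ZMod 2)) ≠ (u, 1) := by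
    rw [hu]; decide
  have hv6 : ((u, u) : Multiplicative (ZMod 2) × Multiplicative (ZMod 2)) ≠ (1, u) := by
    rw [hu]; decide
  have hfi1 : fi 1 = 1 := by
    simp [hfi, hv1, hv2, hv3]
  have hfiA : fi (u, 1) = A := by simp [hfi]
  have hfiB : fi (1, u) = B := by simp [hfi, hv4]
  have hfiC : fi (u, u) = C := by
    simp [hfi, hv5, hv6]
  have hmul2 : ∀ z w : Multiplicative (ZMod 2), z * w = Multiplicative.ofAdd (z.toAdd + w.toAdd) :=
    fun z w => rfl
  refine ⟨{ toFun := f, invFun := fi, left_inv := ?_, right_inv := ?_, map_mul' := ?_ }⟩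
  · intro x
    rcases cls x with rfl | rfl | rfl | rfl
    · rw [hf1]; exact hfi1
    · rw [hfA, hfiA]
    · rw [hfB, hfiB]
    · rw [hfC, hfiC]
  · have hz : ∀ z : Multiplicative (ZMod 2) × Multiplicative (ZMod 2),
        z = 1 ∨ z = (u, 1) ∨ z = (1, u) ∨ z = (u, u) := by
      simp only [hu]; decide
    intro z
    rcases hz z with rfl | rfl | rfl | rfl
    · rw [hfi1, hf1]; rfl
    · rw [hfiA, hfA]
    · rw [hfiB, hfB]
    · rw [hfiC, hfC]
  · intro x y
    rcases cls x with rfl | rfl | rfl | rfl <;> rcases cls y with rfl | rfl | rfl | rfl <;>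
      simp only [one_mul, mul_one, hAA, hBB, hCC, hAB, hBA, hAC, hCA, hBC, hCB,
        hf1, hfA, hfB, hfC] <;>
      (try simp only [hu]) <;> decide

/-! ### Main theorem -/

/-- There is a unique group homomorphism `π : G → S₄` with `π(M_X) = (0 1)`, `π(M_Y) = (0 2)`,
`π(M_Z) = (0 3)`; it is surjective and its kernel is the four-element subgroup
`{1, g₁, g₂, g₃}`, which is isomorphic to the Klein four-group. In particular `G` is an
extension of `S₄` by the Klein four-group. -/
theorem stmt_6 :
    (∃! π : G →* Equiv.Perm (Fin 4),
      π ⟨MX, hMX⟩ = Equiv.swap 0 1 ∧ π ⟨MY, hMY⟩ = Equiv.swap 0 2 ∧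
        π ⟨MZ, hMZ⟩ = Equiv.swap 0 3) ∧
    ∀ π : G →* Equiv.Perm (Fin 4),
      (π ⟨MX, hMX⟩ = Equiv.swap 0 1 ∧ π ⟨MY, hMY⟩ = Equiv.swap 0 2 ∧
        π ⟨MZ, hMZ⟩ = Equiv.swap 0 3) →
      Function.Surjective π ∧
      (π.ker : Set G) = {1, ⟨g₁, hg₁⟩, ⟨g₂, hg₂⟩, ⟨g₃, hg₃⟩} ∧
      Nonempty (π.ker ≃* (Multiplicative (ZMod 2) × Multiplicative (ZMod 2))) := by
  constructor
  · exact ⟨piHom, ⟨pi_MX, pi_MY, pi_MZ⟩, fun π h => pi_unique π h.1 h.2.1 h.2.2⟩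
  · intro π h
    rw [pi_unique π h.1 h.2.1 h.2.2]
    exact ⟨pi_surj, kerset, klein⟩
end

section
/- In GL(6,ℤ) one has (M_X M_Y M_Z)⁴ = g₃ = (M_Z M_X M_Z M_Y)², and this element is not the identity and has order 2; consequently M_X M_Y M_Z has order 8 in G. (This corrects the earlier claim that (XYZ)⁴ = 1 in the duality group of triple vector bundles.) -/
open Matrix

lemma ext_gl {A B : GL (Fin 6) ℤ} (h : (A : Matrix (Fin 6) (Fin 6) ℤ) = B) : A = B :=
  Units.ext h

lemma key1 : (MX * MY * MZ) ^ 4 = g₃ := by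
  apply ext_gl
  show (MXmat * MYmat * MZmat) ^ 4 = (MZmat * MXmat * MZmat * MYmat) ^ 2
  decide

lemma key2 : g₃ ^ 2 = 1 := by
  apply ext_gl
  show ((MZmat * MXmat * MZmat * MYmat) ^ 2) ^ 2 = 1
  decide

lemma key3 : g₃ ≠ 1 := by
  intro h
  have : (MZmat * MXmat * MZmat * MYmat) ^ 2 = 1 := congrArg Units.val h
  revert this
  decide

/-- `(M_X M_Y M_Z)⁴ = g₃ = (M_Z M_X M_Z M_Y)²`; this element is not the identity and has
order 2; consequently `M_X M_Y M_Z` has order 8. (This corrects the earlier claim that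
`(XYZ)⁴ = 1` in the duality group of triple vector bundles.) -/
theorem stmt_7 :
    (MX * MY * MZ) ^ 4 = g₃ ∧ g₃ = (MZ * MX * MZ * MY) ^ 2 ∧
    g₃ ≠ 1 ∧ orderOf g₃ = 2 ∧ orderOf (MX * MY * MZ) = 8 := by
  have h1 := key1
  have h2 : g₃ = (MZ * MX * MZ * MY) ^ 2 := rfl
  have h3 := key3
  have horder : orderOf g₃ = 2 := orderOf_eq_prime key2 key3
  refine ⟨h1, h2, h3, horder, ?_⟩
  have h8 : (MX * MY * MZ) ^ (2 ^ 3) = 1 := by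
    rw [show (2^3 : ℕ) = 4 * 2 from rfl, pow_mul, h1, key2]
  have h4 : (MX * MY * MZ) ^ (2 ^ 2) ≠ 1 := by
    rw [show (2^2 : ℕ) = 4 from rfl, h1]; exact h3
  exact orderOf_eq_prime_pow h4 h8
end

section
/- Define the map ψ on the four-element set {1, g₁, g₂, g₃} by ψ(1) = 1, ψ(g₁) = (0 3)(1 2), ψ(g₂) = (0 1)(2 3), ψ(g₃) = (0 2)(1 3), with values in the permutations of {0,1,2,3}. Then ψ is an injective group homomorphism from ker π onto the Klein four subgroup V = {1, (0 1)(2 3), (0 2)(1 3), (0 3)(1 2)} of S₄, and it is equivariant for the conjugation actions: for every g ∈ G and every k ∈ {1, g₁, g₂, g₃}, ψ(g k g⁻¹) = π(g) ψ(k) π(g)⁻¹. (This identifies the kernel K₄, as an S₄-module, with the normal Klein subgroup of S₄ with conjugation action.) -/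
open Matrix

/-! ### Auxiliary material for `stmt_8` -/

def p₁ : Equiv.Perm (Fin 4) := Equiv.swap 0 3 * Equiv.swap 1 2
def p₂ : Equiv.Perm (Fin 4) := Equiv.swap 0 1 * Equiv.swap 2 3
def p₃ : Equiv.Perm (Fin 4) := Equiv.swap 0 2 * Equiv.swap 1 3

def psiFun (u : GL (Fin 6) ℤ) : Equiv.Perm (Fin 4) :=
  if u = g₁ then p₁ else if u = g₂ then p₂ else if u = g₃ then p₃ else 1

def L : List (GL (Fin 6) ℤ) := [1, g₁, g₂, g₃]

lemma psi_table : ∀ u ∈ L, ∀ v ∈ L, psiFun (u * v) = psiFun u * psiFun v := by decide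

lemma conjX : ∀ u ∈ L, MX * u * MX⁻¹ ∈ L ∧
    psiFun (MX * u * MX⁻¹) = Equiv.swap 0 1 * psiFun u * (Equiv.swap 0 1)⁻¹ := by decide

lemma conjY : ∀ u ∈ L, MY * u * MY⁻¹ ∈ L ∧
    psiFun (MY * u * MY⁻¹) = Equiv.swap 0 2 * psiFun u * (Equiv.swap 0 2)⁻¹ := by decide

lemma conjZ : ∀ u ∈ L, MZ * u * MZ⁻¹ ∈ L ∧
    psiFun (MZ * u * MZ⁻¹) = Equiv.swap 0 3 * psiFun u * (Equiv.swap 0 3)⁻¹ := by decide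

lemma MX_inv : MX⁻¹ = MX := by decide
lemma MY_inv : MY⁻¹ = MY := by decide
lemma MZ_inv : MZ⁻¹ = MZ := by decide

lemma key (π : G →* Equiv.Perm (Fin 4))
    (hX : π ⟨MX, hMX⟩ = Equiv.swap 0 1) (hY : π ⟨MY, hMY⟩ = Equiv.swap 0 2)
    (hZ : π ⟨MZ, hMZ⟩ = Equiv.swap 0 3) (g : G) :
    ∀ u ∈ L, (g : GL (Fin 6) ℤ) * u * (g : GL (Fin 6) ℤ)⁻¹ ∈ L ∧
      psiFun ((g : GL (Fin 6) ℤ) * u * (g : GL (Fin 6) ℤ)⁻¹) = π g * psiFun u * (π g)⁻¹ := by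
  obtain ⟨x, hx⟩ := g
  induction hx using Subgroup.closure_induction'' with
  | mem x hx =>
    rcases hx with rfl | rfl | rfl
    · rw [show π ⟨MX, _⟩ = Equiv.swap 0 1 from hX]; exact conjX
    · rw [show π ⟨MY, _⟩ = Equiv.swap 0 2 from hY]; exact conjY
    · rw [show π ⟨MZ, _⟩ = Equiv.swap 0 3 from hZ]; exact conjZ
  | inv_mem x hx =>
    rcases hx with rfl | rfl | rfl
    · show ∀ u ∈ L, (MX⁻¹ : GL (Fin 6) ℤ) * u * (MX⁻¹)⁻¹ ∈ L ∧
        psiFun ((MX⁻¹ : GL (Fin 6) ℤ) * u * (MX⁻¹)⁻¹) = π ⟨MX⁻¹, G.inv_mem hMX⟩ * psiFun u *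
          (π ⟨MX⁻¹, G.inv_mem hMX⟩)⁻¹
      rw [show (⟨MX⁻¹, _⟩ : G) = ⟨MX, hMX⟩ from Subtype.ext MX_inv, hX,
        show (MX⁻¹ : GL (Fin 6) ℤ) = MX from MX_inv]
      exact conjX
    · show ∀ u ∈ L, (MY⁻¹ : GL (Fin 6) ℤ) * u * (MY⁻¹)⁻¹ ∈ L ∧
        psiFun ((MY⁻¹ : GL (Fin 6) ℤ) * u * (MY⁻¹)⁻¹) = π ⟨MY⁻¹, G.inv_mem hMY⟩ * psiFun u *
          (π ⟨MY⁻¹, G.inv_mem hMY⟩)⁻¹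
      rw [show (⟨MY⁻¹, _⟩ : G) = ⟨MY, hMY⟩ from Subtype.ext MY_inv, hY,
        show (MY⁻¹ : GL (Fin 6) ℤ) = MY from MY_inv]
      exact conjY
    · show ∀ u ∈ L, (MZ⁻¹ : GL (Fin 6) ℤ) * u * (MZ⁻¹)⁻¹ ∈ L ∧
        psiFun ((MZ⁻¹ : GL (Fin 6) ℤ) * u * (MZ⁻¹)⁻¹) = π ⟨MZ⁻¹, G.inv_mem hMZ⟩ * psiFun u *
          (π ⟨MZ⁻¹, G.inv_mem hMZ⟩)⁻¹
      rw [show (⟨MZ⁻¹, _⟩ : G) = ⟨MZ, hMZ⟩ from Subtype.ext MZ_inv, hZ,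
        show (MZ⁻¹ : GL (Fin 6) ℤ) = MZ from MZ_inv]
      exact conjZ
  | one =>
    intro u hu
    rw [show (⟨1, _⟩ : G) = 1 from rfl, _root_.map_one]
    exact ⟨by simpa using hu, by simp⟩
  | mul x y hx hy ihx ihy =>
    intro u hu
    have h1 := ihy u hu
    have h2 := ihx _ h1.1
    have e : x * y * u * (x * y)⁻¹ = x * (y * u * y⁻¹) * x⁻¹ := by group
    refine ⟨?_, ?_⟩
    · show x * y * u * (x * y)⁻¹ ∈ L
      rw [e]; exact h2.1
    · show psiFun (x * y * u * (x * y)⁻¹)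
          = π (⟨x, hx⟩ * ⟨y, hy⟩) * psiFun u * (π (⟨x, hx⟩ * ⟨y, hy⟩))⁻¹
      have h2' : psiFun (x * (y * u * y⁻¹) * x⁻¹)
          = π ⟨x, hx⟩ * psiFun (y * u * y⁻¹) * (π ⟨x, hx⟩)⁻¹ := h2.2
      have h1' : psiFun (y * u * y⁻¹) = π ⟨y, hy⟩ * psiFun u * (π ⟨y, hy⟩)⁻¹ := h1.2
      rw [e, _root_.map_mul, h2', h1']
      simp [mul_assoc]

set_option maxHeartbeats 2000000 in
/-- The map `ψ` on `ker π = {1, g₁, g₂, g₃}` given by `ψ(1) = 1`, `ψ(g₁) = (0 3)(1 2)`,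
`ψ(g₂) = (0 1)(2 3)`, `ψ(g₃) = (0 2)(1 3)` is an injective group homomorphism from `ker π`
onto the Klein four subgroup `V` of `S₄`, equivariant for the conjugation actions. -/
theorem stmt_8 (π : G →* Equiv.Perm (Fin 4))
    (hX : π ⟨MX, hMX⟩ = Equiv.swap 0 1) (hY : π ⟨MY, hMY⟩ = Equiv.swap 0 2)
    (hZ : π ⟨MZ, hMZ⟩ = Equiv.swap 0 3)
    (hker : (π.ker : Set G) = {1, ⟨g₁, hg₁⟩, ⟨g₂, hg₂⟩, ⟨g₃, hg₃⟩}) :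
    ∃ ψ : π.ker →* Equiv.Perm (Fin 4),
      Function.Injective ψ ∧
      (∀ k : π.ker,
        ((k : G) = ⟨g₁, hg₁⟩ → ψ k = Equiv.swap 0 3 * Equiv.swap 1 2) ∧
        ((k : G) = ⟨g₂, hg₂⟩ → ψ k = Equiv.swap 0 1 * Equiv.swap 2 3) ∧
        ((k : G) = ⟨g₃, hg₃⟩ → ψ k = Equiv.swap 0 2 * Equiv.swap 1 3)) ∧
      (ψ.range : Set (Equiv.Perm (Fin 4))) =
        {1, Equiv.swap 0 1 * Equiv.swap 2 3, Equiv.swap 0 2 * Equiv.swap 1 3,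
          Equiv.swap 0 3 * Equiv.swap 1 2} ∧
      ∀ (g : G) (k : π.ker),
        ψ ⟨g * (k : G) * g⁻¹, (MonoidHom.normal_ker π).conj_mem (k : G) k.2 g⟩
          = π g * ψ k * (π g)⁻¹ := by
  have mem4' : ∀ k : π.ker, ((k : G) : GL (Fin 6) ℤ) = 1 ∨ ((k : G) : GL (Fin 6) ℤ) = g₁ ∨
      ((k : G) : GL (Fin 6) ℤ) = g₂ ∨ ((k : G) : GL (Fin 6) ℤ) = g₃ := by
    intro k
    have h : (k : G) ∈ (π.ker : Set G) := k.2
    rw [hker] at h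
    simp only [Set.mem_insert_iff, Set.mem_singleton_iff] at h
    rcases h with h | h | h | h
    · exact Or.inl (congrArg Subtype.val h)
    · exact Or.inr (Or.inl (congrArg Subtype.val h))
    · exact Or.inr (Or.inr (Or.inl (congrArg Subtype.val h)))
    · exact Or.inr (Or.inr (Or.inr (congrArg Subtype.val h)))
  have mem4 : ∀ k : π.ker, ((k : G) : GL (Fin 6) ℤ) ∈ L := by
    intro k
    rcases mem4' k with h | h | h | h <;> rw [h] <;> decide
  set F : π.ker → Equiv.Perm (Fin 4) := fun k => psiFun ((k : G) : GL (Fin 6) ℤ) with hF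
  have hom : ∀ a b : π.ker, F (a * b) = F a * F b := by
    intro a b
    exact psi_table _ (mem4 a) _ (mem4 b)
  refine ⟨MonoidHom.mk' F hom, ?_, ?_, ?_, ?_⟩
  · intro a b h
    have h' : psiFun ((a : G) : GL (Fin 6) ℤ) = psiFun ((b : G) : GL (Fin 6) ℤ) := h
    apply Subtype.ext
    apply Subtype.ext
    rcases mem4' a with ha | ha | ha | ha <;> rcases mem4' b with hb | hb | hb | hb <;>
      rw [ha, hb] at h' ⊢ <;> first | exact absurd h' (by decide) | decide
  · intro k
    refine ⟨fun hk => ?_, fun hk => ?_, fun hk => ?_⟩ <;>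
      [ (have h : ((k : G) : GL (Fin 6) ℤ) = g₁ := congrArg Subtype.val hk);
        (have h : ((k : G) : GL (Fin 6) ℤ) = g₂ := congrArg Subtype.val hk);
        (have h : ((k : G) : GL (Fin 6) ℤ) = g₃ := congrArg Subtype.val hk)] <;>
      · show psiFun ((k : G) : GL (Fin 6) ℤ) = _
        rw [h]
        decide
  · ext σ
    simp only [SetLike.mem_coe, MonoidHom.mem_range, Set.mem_insert_iff,
      Set.mem_singleton_iff]
    constructor
    · rintro ⟨k, rfl⟩
      have hψ : (MonoidHom.mk' F hom) k = psiFun ((k : G) : GL (Fin 6) ℤ) := rfl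
      rw [hψ]
      rcases mem4' k with h | h | h | h <;> rw [h] <;> decide
    · intro h
      have k1 : (⟨g₁, hg₁⟩ : G) ∈ π.ker := by
        rw [← SetLike.mem_coe, hker]; simp
      have k2 : (⟨g₂, hg₂⟩ : G) ∈ π.ker := by
        rw [← SetLike.mem_coe, hker]; simp
      have k3 : (⟨g₃, hg₃⟩ : G) ∈ π.ker := by
        rw [← SetLike.mem_coe, hker]; simp
      rcases h with rfl | rfl | rfl | rfl
      · exact ⟨1, _root_.map_one _⟩
      · exact ⟨⟨⟨g₂, hg₂⟩, k2⟩, by show psiFun g₂ = _; decide⟩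
      · exact ⟨⟨⟨g₃, hg₃⟩, k3⟩, by show psiFun g₃ = _; decide⟩
      · exact ⟨⟨⟨g₁, hg₁⟩, k1⟩, by show psiFun g₁ = _; decide⟩
  · intro g k
    exact (key π hX hY hZ g _ (mem4 k)).2
end

section
/- Let H be the subgroup of G generated by a := (M_Z M_X M_Y)² and b := (M_X M_Y M_Z)², and let K be the subgroup of G generated by M_X and M_Y. Then H is normal in G, K is isomorphic to the symmetric group S₃, H ∩ K is trivial, and H·K = G; consequently G is an internal semidirect product of H by K, i.e. G ≅ (ℤ/4 × ℤ/4) ⋊ S₃. -/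
open Matrix

open Pointwise

def a : GL (Fin 6) ℤ := (MZ * MX * MY) ^ 2
def b : GL (Fin 6) ℤ := (MX * MY * MZ) ^ 2

/-- The subgroup `H` generated by `a`, `b` and the subgroup `K` generated by `M_X`, `M_Y`. -/
def H : Subgroup (GL (Fin 6) ℤ) := Subgroup.closure {a, b}
def K : Subgroup (GL (Fin 6) ℤ) := Subgroup.closure {MX, MY}


-- ===================== auxiliary development =====================
set_option maxHeartbeats 1000000

namespace Stmt11Aux

abbrev GL6 := GL (Fin 6) ℤ
abbrev Mat6 := Matrix (Fin 6) (Fin 6) ℤ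

def aMat : Mat6 := !![0,0,0,0,0,1; 0,0,0,0,-1,0; 0,0,1,0,0,0; 0,0,0,1,0,0; 0,1,0,0,0,0; -1,0,0,0,0,0]
def aInv : Mat6 := !![0,0,0,0,0,-1; 0,0,0,0,1,0; 0,0,1,0,0,0; 0,0,0,1,0,0; 0,-1,0,0,0,0; 1,0,0,0,0,0]
def bMat : Mat6 := !![0,0,0,0,0,-1; 0,1,0,0,0,0; 0,0,0,1,0,0; 0,0,-1,0,0,0; 0,0,0,0,1,0; 1,0,0,0,0,0]
def bInv : Mat6 := !![0,0,0,0,0,1; 0,1,0,0,0,0; 0,0,0,-1,0,0; 0,0,1,0,0,0; 0,0,0,0,1,0; -1,0,0,0,0,0]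
def Hl : List Mat6 := [!![1,0,0,0,0,0; 0,1,0,0,0,0; 0,0,1,0,0,0; 0,0,0,1,0,0; 0,0,0,0,1,0; 0,0,0,0,0,1],
  !![0,0,0,0,0,-1; 0,1,0,0,0,0; 0,0,0,1,0,0; 0,0,-1,0,0,0; 0,0,0,0,1,0; 1,0,0,0,0,0],
  !![-1,0,0,0,0,0; 0,1,0,0,0,0; 0,0,-1,0,0,0; 0,0,0,-1,0,0; 0,0,0,0,1,0; 0,0,0,0,0,-1],
  !![0,0,0,0,0,1; 0,1,0,0,0,0; 0,0,0,-1,0,0; 0,0,1,0,0,0; 0,0,0,0,1,0; -1,0,0,0,0,0],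
  !![0,0,0,0,0,1; 0,0,0,0,-1,0; 0,0,1,0,0,0; 0,0,0,1,0,0; 0,1,0,0,0,0; -1,0,0,0,0,0],
  !![1,0,0,0,0,0; 0,0,0,0,-1,0; 0,0,0,1,0,0; 0,0,-1,0,0,0; 0,1,0,0,0,0; 0,0,0,0,0,1],
  !![0,0,0,0,0,-1; 0,0,0,0,-1,0; 0,0,-1,0,0,0; 0,0,0,-1,0,0; 0,1,0,0,0,0; 1,0,0,0,0,0],
  !![-1,0,0,0,0,0; 0,0,0,0,-1,0; 0,0,0,-1,0,0; 0,0,1,0,0,0; 0,1,0,0,0,0; 0,0,0,0,0,-1],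
  !![-1,0,0,0,0,0; 0,-1,0,0,0,0; 0,0,1,0,0,0; 0,0,0,1,0,0; 0,0,0,0,-1,0; 0,0,0,0,0,-1],
  !![0,0,0,0,0,1; 0,-1,0,0,0,0; 0,0,0,1,0,0; 0,0,-1,0,0,0; 0,0,0,0,-1,0; -1,0,0,0,0,0],
  !![1,0,0,0,0,0; 0,-1,0,0,0,0; 0,0,-1,0,0,0; 0,0,0,-1,0,0; 0,0,0,0,-1,0; 0,0,0,0,0,1],
  !![0,0,0,0,0,-1; 0,-1,0,0,0,0; 0,0,0,-1,0,0; 0,0,1,0,0,0; 0,0,0,0,-1,0; 1,0,0,0,0,0],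
  !![0,0,0,0,0,-1; 0,0,0,0,1,0; 0,0,1,0,0,0; 0,0,0,1,0,0; 0,-1,0,0,0,0; 1,0,0,0,0,0],
  !![-1,0,0,0,0,0; 0,0,0,0,1,0; 0,0,0,1,0,0; 0,0,-1,0,0,0; 0,-1,0,0,0,0; 0,0,0,0,0,-1],
  !![0,0,0,0,0,1; 0,0,0,0,1,0; 0,0,-1,0,0,0; 0,0,0,-1,0,0; 0,-1,0,0,0,0; -1,0,0,0,0,0],
  !![1,0,0,0,0,0; 0,0,0,0,1,0; 0,0,0,-1,0,0; 0,0,1,0,0,0; 0,-1,0,0,0,0; 0,0,0,0,0,1]]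


def aU : GL6 := ⟨aMat, aInv, by decide, by decide⟩
def bU : GL6 := ⟨bMat, bInv, by decide, by decide⟩

lemma a_eq : a = aU := Units.ext (by decide)
lemma b_eq : b = bU := Units.ext (by decide)

lemma hcomm : Commute aU bU := by show aU * bU = bU * aU; decide
lemma ha4 : aU ^ 4 = 1 := by decide
lemma hb4 : bU ^ 4 = 1 := by decide

lemma ha_mem : a ∈ G := G.pow_mem (G.mul_mem (G.mul_mem hMZ hMX) hMY) 2
lemma hb_mem : b ∈ G := G.pow_mem (G.mul_mem (G.mul_mem hMX hMY) hMZ) 2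

lemma haH : a ∈ H := Subgroup.subset_closure (by simp)
lemma hbH : b ∈ H := Subgroup.subset_closure (by simp)
lemma haU : aU ∈ H := a_eq ▸ haH
lemma hbU : bU ∈ H := b_eq ▸ hbH
lemma hMXK : MX ∈ K := Subgroup.subset_closure (by simp)
lemma hMYK : MY ∈ K := Subgroup.subset_closure (by simp)

lemma hHG : H ≤ G := (Subgroup.closure_le G).2 (by
  intro x hx
  simp only [Set.mem_insert_iff, Set.mem_singleton_iff] at hx
  rcases hx with rfl | rfl
  · exact ha_mem
  · exact hb_mem)

lemma hKG : K ≤ G := (Subgroup.closure_le G).2 (by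
  intro x hx
  simp only [Set.mem_insert_iff, Set.mem_singleton_iff] at hx
  rcases hx with rfl | rfl
  · exact hMX
  · exact hMY)

/-- every element of `H` is `aU ^ i * bU ^ j`. -/
lemma H_decomp : ∀ x ∈ H, ∃ i j : ℕ, x = aU ^ i * bU ^ j := by
  intro x hx
  induction hx using Subgroup.closure_induction with
  | mem g hg =>
    simp only [Set.mem_insert_iff, Set.mem_singleton_iff] at hg
    rcases hg with rfl | rfl
    · exact ⟨1, 0, by rw [a_eq, pow_one, pow_zero, mul_one]⟩
    · exact ⟨0, 1, by rw [b_eq, pow_zero, pow_one, one_mul]⟩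
  | one => exact ⟨0, 0, by rw [pow_zero, pow_zero, one_mul]⟩
  | mul x y hxm hym ihx ihy =>
    obtain ⟨i, j, rfl⟩ := ihx
    obtain ⟨k, l, rfl⟩ := ihy
    refine ⟨i + k, j + l, ?_⟩
    rw [pow_add, pow_add]
    exact (hcomm.pow_pow k j).symm.mul_mul_mul_comm _ _
  | inv x hxm ihx =>
    obtain ⟨i, j, rfl⟩ := ihx
    refine ⟨3 * i, 3 * j, inv_eq_of_mul_eq_one_right ?_⟩
    rw [(hcomm.symm.pow_pow j (3 * i)).mul_mul_mul_comm, ← pow_add, ← pow_add,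
      show i + 3 * i = 4 * i by ring, show j + 3 * j = 4 * j by ring,
      pow_mul, pow_mul, ha4, hb4, one_pow, one_pow, one_mul]

lemma key2 : ∀ i ∈ List.range 4, ∀ j ∈ List.range 4,
    ((aU ^ i * bU ^ j : GL6) : Mat6) ∈ Hl := by decide

lemma mem_H_iff {x : GL6} : x ∈ H ↔ (x : Mat6) ∈ Hl := by
  constructor
  · intro hx
    obtain ⟨i, j, rfl⟩ := H_decomp x hx
    rw [pow_eq_pow_mod i ha4, pow_eq_pow_mod j hb4]
    exact key2 _ (List.mem_range.mpr (Nat.mod_lt _ (by norm_num)))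
      _ (List.mem_range.mpr (Nat.mod_lt _ (by norm_num)))
  · intro hx
    have key : ∀ p ∈ Hl, ∃ i ∈ List.range 4, ∃ j ∈ List.range 4,
        p = ((aU ^ i * bU ^ j : GL6) : Mat6) := by decide
    obtain ⟨i, _, j, _, hp⟩ := key _ hx
    rw [Units.ext hp]
    exact H.mul_mem (H.pow_mem haU i) (H.pow_mem hbU j)

def Kwords : List GL6 := [1, MX, MY, MX * MY, MY * MX, MX * MY * MX]
def Kl : List Mat6 := Kwords.map Units.val

def SubK : Subgroup GL6 where
  carrier := {x | (x : Mat6) ∈ Kl}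
  one_mem' := by decide
  mul_mem' := by
    intro x y hx hy
    have key : ∀ p ∈ Kl, ∀ q ∈ Kl, p * q ∈ Kl := by decide
    exact key _ hx _ hy
  inv_mem' := by
    intro x hx
    have key : ∀ p ∈ Kl, ∃ q ∈ Kl, p * q = 1 := by decide
    obtain ⟨q, hq, hpq⟩ := key _ hx
    have e : ((x⁻¹ : GL6) : Mat6) = q := by
      calc ((x⁻¹ : GL6) : Mat6) = (x⁻¹ : GL6) * ((x : Mat6) * q) := by rw [hpq, mul_one]
      _ = ((x⁻¹ : GL6) * (x : Mat6)) * q := by rw [mul_assoc]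
      _ = q := by rw [x.inv_mul, one_mul]
    show ((x⁻¹ : GL6) : Mat6) ∈ Kl
    rw [e]; exact hq

lemma mem_SubK {x : GL6} : x ∈ SubK ↔ (x : Mat6) ∈ Kl := Iff.rfl

lemma Kwords_mem : ∀ w ∈ Kwords, w ∈ K := by
  intro w hw
  simp only [Kwords, List.mem_cons, List.not_mem_nil, or_false] at hw
  rcases hw with rfl | rfl | rfl | rfl | rfl | rfl
  · exact K.one_mem
  · exact hMXK
  · exact hMYK
  · exact K.mul_mem hMXK hMYK
  · exact K.mul_mem hMYK hMXK
  · exact K.mul_mem (K.mul_mem hMXK hMYK) hMXK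

lemma K_eq_SubK : K = SubK := by
  apply le_antisymm
  · apply (Subgroup.closure_le SubK).2
    intro x hx
    simp only [Set.mem_insert_iff, Set.mem_singleton_iff] at hx
    rcases hx with rfl | rfl
    · rw [SetLike.mem_coe, mem_SubK]; decide
    · rw [SetLike.mem_coe, mem_SubK]; decide
  · intro x hx
    rw [mem_SubK] at hx
    have key : ∀ p ∈ Kl, ∃ w ∈ Kwords, p = (w : Mat6) := by decide
    obtain ⟨w, hw, hp⟩ := key _ hx
    rw [Units.ext hp]
    exact Kwords_mem w hw

lemma conj_mem_Hl (M : Mat6) (hM : M * M = 1)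
    (hfwd : ∀ p ∈ Hl, M * p * M ∈ Hl) :
    ∀ p : Mat6, p ∈ Hl ↔ M * p * M ∈ Hl := by
  intro p
  constructor
  · exact hfwd p
  · intro h
    have h2 := hfwd _ h
    have e : M * (M * p * M) * M = p := by
      simp only [← mul_assoc, hM, one_mul]
      rw [mul_assoc, hM, mul_one]
    rwa [e] at h2

lemma gen_normalizes : ∀ g ∈ ({MX, MY, MZ} : Set GL6), g ∈ Subgroup.normalizer (H : Set GL6) := by
  intro g hg
  rw [Subgroup.mem_normalizer_iff]
  intro n
  rw [mem_H_iff, mem_H_iff]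
  simp only [Set.mem_insert_iff, Set.mem_singleton_iff] at hg
  rcases hg with rfl | rfl | rfl
  · exact conj_mem_Hl MXmat (by decide) (by decide) (n : Mat6)
  · exact conj_mem_Hl MYmat (by decide) (by decide) (n : Mat6)
  · exact conj_mem_Hl MZmat (by decide) (by decide) (n : Mat6)

lemma G_le_normalizer : G ≤ Subgroup.normalizer (H : Set GL6) :=
  (Subgroup.closure_le _).2 gen_normalizes

lemma conjK (k h : GL6) (hk : k ∈ G) (hh : h ∈ H) : k * h * k⁻¹ ∈ H :=
  (Subgroup.mem_normalizer_iff.mp (G_le_normalizer hk) h).mp hh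

lemma part1 : (H.subgroupOf G).Normal := by
  constructor
  intro n hn g
  rw [Subgroup.mem_subgroupOf] at hn ⊢
  simpa using conjK g n g.2 hn

lemma part3 : H ⊓ K = ⊥ := by
  rw [eq_bot_iff]
  intro x hx
  have hxH : x ∈ H := hx.1
  have hxK : x ∈ K := hx.2
  rw [mem_H_iff] at hxH
  rw [K_eq_SubK, mem_SubK] at hxK
  have key : ∀ p ∈ Hl, p ∈ Kl → p = (1 : Mat6) := by decide
  rw [Subgroup.mem_bot]
  exact Units.ext (key _ hxH hxK)

lemma part4 : (H : Set GL6) * (K : Set GL6) = (G : Set GL6) := by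
  apply Set.eq_of_subset_of_subset
  · rintro x ⟨h, hh, k, hk, rfl⟩
    exact G.mul_mem (hHG hh) (hKG hk)
  · intro x hx
    have hx' : x ∈ Subgroup.closure {MX, MY, MZ} := hx
    clear hx
    induction hx' using Subgroup.closure_induction with
    | mem g hg =>
      simp only [Set.mem_insert_iff, Set.mem_singleton_iff] at hg
      rcases hg with rfl | rfl | rfl
      · exact ⟨1, H.one_mem, MX, hMXK, one_mul _⟩
      · exact ⟨1, H.one_mem, MY, hMYK, one_mul _⟩
      · refine ⟨aU ^ 3 * bU, H.mul_mem (H.pow_mem haU 3) hbU,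
          MX * MY * MX, K.mul_mem (K.mul_mem hMXK hMYK) hMXK, ?_⟩
        exact Units.ext (by decide)
    | one => exact ⟨1, H.one_mem, 1, K.one_mem, one_mul _⟩
    | mul x y hxg hyg ihx ihy =>
      obtain ⟨h1, hh1, k1, hk1, rfl⟩ := ihx
      obtain ⟨h2, hh2, k2, hk2, rfl⟩ := ihy
      refine ⟨h1 * (k1 * h2 * k1⁻¹), H.mul_mem hh1 (conjK k1 h2 (hKG hk1) hh2),
        k1 * k2, K.mul_mem hk1 hk2, ?_⟩
      group
    | inv x hxg ihx =>
      obtain ⟨h, hh, k, hk, rfl⟩ := ihx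
      exact ⟨k⁻¹ * h⁻¹ * (k⁻¹)⁻¹, conjK k⁻¹ h⁻¹ (G.inv_mem (hKG hk)) (H.inv_mem hh),
        k⁻¹, K.inv_mem hk, by group⟩

def s01 : Equiv.Perm (Fin 3) := Equiv.swap 0 1
def s12 : Equiv.Perm (Fin 3) := Equiv.swap 1 2
def s02 : Equiv.Perm (Fin 3) := Equiv.swap 0 2

def fK0 : Equiv.Perm (Fin 3) → GL6 := fun σ =>
  if σ = 1 then 1 else if σ = s01 then MX else if σ = s12 then MY
  else if σ = s02 then MX * MY * MX else if σ = s01 * s12 then MX * MY else MY * MX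

def fK : Equiv.Perm (Fin 3) →* GL6 where
  toFun := fK0
  map_one' := by decide
  map_mul' := by decide

lemma fK_inj : Function.Injective fK := by
  rw [injective_iff_map_eq_one]
  decide

lemma perm3_cases : ∀ σ : Equiv.Perm (Fin 3),
    σ = 1 ∨ σ = s01 ∨ σ = s12 ∨ σ = s02 ∨ σ = s01 * s12 ∨ σ = s12 * s01 := by decide

lemma fK_mem_K : ∀ σ, fK σ ∈ K := by
  intro σ
  rcases perm3_cases σ with rfl | rfl | rfl | rfl | rfl | rfl
  · rw [show fK 1 = 1 from by decide]; exact K.one_mem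
  · rw [show fK s01 = MX from by decide]; exact hMXK
  · rw [show fK s12 = MY from by decide]; exact hMYK
  · rw [show fK s02 = MX * MY * MX from by decide]
    exact K.mul_mem (K.mul_mem hMXK hMYK) hMXK
  · rw [show fK (s01 * s12) = MX * MY from by decide]; exact K.mul_mem hMXK hMYK
  · rw [show fK (s12 * s01) = MY * MX from by decide]; exact K.mul_mem hMYK hMXK

lemma fK_range : fK.range = K := by
  apply le_antisymm
  · rintro x ⟨σ, rfl⟩
    exact fK_mem_K σ
  · apply (Subgroup.closure_le _).2
    intro x hx
    simp only [Set.mem_insert_iff, Set.mem_singleton_iff] at hx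
    rcases hx with rfl | rfl
    · exact ⟨s01, by decide⟩
    · exact ⟨s12, by decide⟩

noncomputable def eK : K ≃* Equiv.Perm (Fin 3) :=
  ((MonoidHom.ofInjective fK_inj).trans (MulEquiv.subgroupCongr fK_range)).symm

abbrev Q := Multiplicative (ZMod 4) × Multiplicative (ZMod 4)

def qmap (α β γ δ : ZMod 4) : Q → Q := fun x =>
  (Multiplicative.ofAdd (α * x.1.toAdd + β * x.2.toAdd),
   Multiplicative.ofAdd (γ * x.1.toAdd + δ * x.2.toAdd))

def mkAut (f g : Q → Q) (h1 : Function.LeftInverse g f)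
    (h2 : Function.RightInverse g f) (h3 : ∀ x y, f (x * y) = f x * f y) : MulAut Q :=
  { toFun := f, invFun := g, left_inv := h1, right_inv := h2, map_mul' := h3 }

def A1 : MulAut Q := mkAut (qmap 1 0 0 1) (qmap 1 0 0 1) (by decide) (by decide) (by decide)
def AX : MulAut Q := mkAut (qmap 1 3 0 3) (qmap 1 3 0 3) (by decide) (by decide) (by decide)
def AY : MulAut Q := mkAut (qmap 3 0 3 1) (qmap 3 0 3 1) (by decide) (by decide) (by decide)
def AZ : MulAut Q := mkAut (qmap 0 1 1 0) (qmap 0 1 1 0) (by decide) (by decide) (by decide)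
def AC : MulAut Q := mkAut (qmap 0 3 1 3) (qmap 3 1 3 0) (by decide) (by decide) (by decide)
def AC2 : MulAut Q := mkAut (qmap 3 1 3 0) (qmap 0 3 1 3) (by decide) (by decide) (by decide)

def phi0 : Equiv.Perm (Fin 3) → MulAut Q := fun σ =>
  if σ = 1 then A1 else if σ = s01 then AX else if σ = s12 then AY
  else if σ = s02 then AZ else if σ = s01 * s12 then AC else AC2

def phi : Equiv.Perm (Fin 3) →* MulAut Q where
  toFun := phi0
  map_one' := MulEquiv.ext (by decide : ∀ x, phi0 1 x = (1 : MulAut Q) x)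
  map_mul' := by
    have h : ∀ σ τ : Equiv.Perm (Fin 3), ∀ x : Q, phi0 (σ * τ) x = (phi0 σ * phi0 τ) x := by
      decide
    intro σ τ
    exact MulEquiv.ext (h σ τ)

def fH0 : Q → GL6 := fun q => aU ^ (q.1.toAdd.val) * bU ^ (q.2.toAdd.val)

lemma fH0_one : fH0 1 = 1 := by decide

lemma fH0_mul : ∀ x y : Q, fH0 (x * y) = fH0 x * fH0 y := by
  intro x y
  simp only [fH0, Prod.fst_mul, Prod.snd_mul, toAdd_mul]
  rw [ZMod.val_add, ZMod.val_add, ← pow_eq_pow_mod _ ha4, ← pow_eq_pow_mod _ hb4,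
    pow_add, pow_add]
  exact (hcomm.pow_pow _ _).mul_mul_mul_comm _ _

def fH : Q →* GL6 where
  toFun := fH0
  map_one' := fH0_one
  map_mul' := fH0_mul

lemma fH_mem_H : ∀ q : Q, fH q ∈ H := fun q =>
  H.mul_mem (H.pow_mem haU _) (H.pow_mem hbU _)

lemma fH_inj_one : ∀ q : Q, fH q = 1 → q = 1 := by
  have h : ∀ q : Q, fH0 q = 1 → q = 1 := by decide
  exact h

def gx : Q := (Multiplicative.ofAdd 1, 1)
def gy : Q := (1, Multiplicative.ofAdd 1)

lemma qdecomp : ∀ q : Q, ∃ m ∈ List.range 4, ∃ n ∈ List.range 4, q = gx ^ m * gy ^ n := by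
  decide

lemma hom_ext {f g : Q →* GL6} (h1 : f gx = g gx) (h2 : f gy = g gy) : f = g := by
  refine MonoidHom.ext fun q => ?_
  obtain ⟨m, _, n, _, rfl⟩ := qdecomp q
  simp only [_root_.map_mul, _root_.map_pow, h1, h2]

lemma compat : ∀ σ : Equiv.Perm (Fin 3),
    fH.comp (phi σ).toMonoidHom = (MulAut.conj (fK σ)).toMonoidHom.comp fH := by
  have hgen : ∀ σ : Equiv.Perm (Fin 3),
      (fH0 (phi0 σ gx) = fK0 σ * fH0 gx * (fK0 σ)⁻¹) ∧
      (fH0 (phi0 σ gy) = fK0 σ * fH0 gy * (fK0 σ)⁻¹) := by decide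
  intro σ
  apply hom_ext
  · simp only [MonoidHom.comp_apply, MulEquiv.coe_toMonoidHom, MulAut.conj_apply]
    exact (hgen σ).1
  · simp only [MonoidHom.comp_apply, MulEquiv.coe_toMonoidHom, MulAut.conj_apply]
    exact (hgen σ).2

noncomputable def F : Q ⋊[phi] Equiv.Perm (Fin 3) →* GL6 :=
  SemidirectProduct.lift fH fK compat

lemma F_inl (n : Q) : F (SemidirectProduct.inl n) = fH n := SemidirectProduct.lift_inl fH fK compat n
lemma F_inr (σ : Equiv.Perm (Fin 3)) : F (SemidirectProduct.inr σ) = fK σ :=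
  SemidirectProduct.lift_inr fH fK compat σ

lemma F_apply (x : Q ⋊[phi] Equiv.Perm (Fin 3)) : F x = fH x.left * fK x.right := by
  conv_lhs => rw [← SemidirectProduct.inl_left_mul_inr_right x]
  rw [_root_.map_mul, F_inl, F_inr]

lemma F_inj : Function.Injective F := by
  rw [injective_iff_map_eq_one]
  intro x hx
  rw [F_apply] at hx
  have e : fH x.left = (fK x.right)⁻¹ := eq_inv_of_mul_eq_one_left hx
  have hmem : fH x.left ∈ H ⊓ K := ⟨fH_mem_H _, e ▸ K.inv_mem (fK_mem_K _)⟩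
  rw [part3, Subgroup.mem_bot] at hmem
  have hk1 : fK x.right = 1 := by
    have := hmem ▸ e
    simpa using this.symm
  have hr : x.right = 1 := fK_inj (by rw [hk1]; exact (_root_.map_one fK).symm)
  have hl : x.left = 1 := fH_inj_one _ hmem
  exact SemidirectProduct.ext hl hr

lemma F_range : F.range = G := by
  apply le_antisymm
  · rintro x ⟨y, rfl⟩
    rw [F_apply]
    exact G.mul_mem (hHG (fH_mem_H _)) (hKG (fK_mem_K _))
  · apply (Subgroup.closure_le _).2
    intro x hx
    simp only [Set.mem_insert_iff, Set.mem_singleton_iff] at hx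
    rcases hx with rfl | rfl | rfl
    · exact ⟨SemidirectProduct.inr s01, by rw [F_inr]; decide⟩
    · exact ⟨SemidirectProduct.inr s12, by rw [F_inr]; decide⟩
    · refine ⟨SemidirectProduct.inl ((Multiplicative.ofAdd 3, Multiplicative.ofAdd 1) : Q) *
        SemidirectProduct.inr s02, ?_⟩
      rw [_root_.map_mul, F_inl, F_inr]
      have h : fH0 ((Multiplicative.ofAdd 3, Multiplicative.ofAdd 1) : Q) * fK0 s02 = MZ := by
        decide
      exact h

noncomputable def eG : G ≃* Q ⋊[phi] Equiv.Perm (Fin 3) :=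
  (MulEquiv.subgroupCongr F_range.symm).trans (MonoidHom.ofInjective F_inj).symm

end Stmt11Aux

/-- `H` is normal in `G`, `K ≅ S₃`, `H ∩ K` is trivial and `H·K = G`; consequently `G` is an
internal semidirect product of `H` by `K`, i.e. `G ≅ (ℤ/4 × ℤ/4) ⋊ S₃`. -/
theorem stmt_11 :
    (H.subgroupOf G).Normal ∧
    Nonempty (K ≃* Equiv.Perm (Fin 3)) ∧
    H ⊓ K = ⊥ ∧
    (H : Set (GL (Fin 6) ℤ)) * (K : Set (GL (Fin 6) ℤ)) = (G : Set (GL (Fin 6) ℤ)) ∧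
    ∃ φ : Equiv.Perm (Fin 3) →* MulAut (Multiplicative (ZMod 4) × Multiplicative (ZMod 4)),
      Nonempty (G ≃* (Multiplicative (ZMod 4) × Multiplicative (ZMod 4)) ⋊[φ] Equiv.Perm (Fin 3)) := by
  exact ⟨Stmt11Aux.part1, ⟨Stmt11Aux.eK⟩, Stmt11Aux.part3, Stmt11Aux.part4,
    Stmt11Aux.phi, ⟨Stmt11Aux.eG⟩⟩
end
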